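/- Let μ : 𝒳 × 𝒲 → ℝ be measurable with |μ| ≤ M for a constant M < ∞, fix F < ∞, and define η(x) := ∫_𝒲 exp⟨δ, s(x, w)⟩·μ(x, w)·f(x, w) dw and m(x) := η(x)/ν(x). Then there exists a finite constant C₂, depending only on (τ, M, F, f_min, f_max, |𝒲|), such that for every measurable μ̂ : 𝒳 × 𝒲 → ℝ with |μ̂| ≤ M and every measurable f̂ : 𝒳 × 𝒲 → [0, F], setting η̂(x) := ∫_𝒲 exp⟨δ, s(x, w)⟩·μ̂(x, w)·f̂(x, w) dw and m̂(x) := η̂(x)/ν̂†(x), one has the Lipschitz stability bound ‖m̂ − m‖_{L²(P)} ≤ C₂·(‖μ̂ − μ‖_{L²(P)} + ‖f̂ − f‖_{L²(P)}). -/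

import Mathlib

open MeasureTheory
open scoped RealInnerProductSpace ENNReal NNReal

private lemma clamp_abs_sub_le {a lo hi c : ℝ} (h1 : lo ≤ c) (h2 : c ≤ hi) :
    |min (max a lo) hi - c| ≤ |a - c| := by
  rw [abs_sub_le_iff]
  constructor
  · rcases le_total a lo with h | h
    · rw [max_eq_right h]
      have hm := min_le_left lo hi
      have := abs_nonneg (a - c)
      linarith
    · rw [max_eq_left h]
      have hm := min_le_left a hi
      have := le_abs_self (a - c)
      linarith
  · rcases le_total (max a lo) hi with h | h
    · rw [min_eq_left h]
      have hu : a ≤ max a lo := le_max_left _ _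
      have := neg_abs_le (a - c)
      linarith
    · rw [min_eq_right h]
      have := abs_nonneg (a - c)
      linarith

set_option maxHeartbeats 1000000 in
theorem tilted_conditional_mean_lipschitz_stability
    {X : Type*} [MeasurableSpace X] (PX : Measure X) [IsProbabilityMeasure PX]
    {q : ℕ} (Wset : Set (EuclideanSpace ℝ (Fin q)))
    (hWmeas : MeasurableSet Wset) (hWvol : MeasureTheory.volume Wset < ⊤)
    (f : X × EuclideanSpace ℝ (Fin q) → ℝ) (hf_meas : Measurable f)
    (fmin fmax : ℝ) (hfmin : 0 < fmin)
    (hf_bdd : ∀ x w, w ∈ Wset → fmin ≤ f (x, w) ∧ f (x, w) ≤ fmax)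
    (hf_int : ∀ᵐ x ∂PX, ∫ w in Wset, f (x, w) = 1)
    (s : X × EuclideanSpace ℝ (Fin q) → EuclideanSpace ℝ (Fin q))
    (hs_meas : Measurable s) (Ms : ℝ) (hs_bdd : ∀ p, ‖s p‖ ≤ Ms)
    (δ : EuclideanSpace ℝ (Fin q)) (Δ : ℝ) (hδ : ‖δ‖ ≤ Δ)
    (μ : X × EuclideanSpace ℝ (Fin q) → ℝ) (hμ_meas : Measurable μ)
    (M : ℝ) (hμ_bdd : ∀ p, |μ p| ≤ M) (F : ℝ) :
    ∃ C₂ : ℝ,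
      ∀ μhat fhat : X × EuclideanSpace ℝ (Fin q) → ℝ,
        Measurable μhat → (∀ p, |μhat p| ≤ M) →
        Measurable fhat → (∀ p, 0 ≤ fhat p ∧ fhat p ≤ F) →
        ∀ (Pm : Measure (X × EuclideanSpace ℝ (Fin q))),
          Pm = (PX.prod (MeasureTheory.volume.restrict Wset)).withDensity
                (fun p => ENNReal.ofReal (f p)) →
        ∀ ν νhat νdag η ηhat m mhat : X → ℝ,
          (∀ x, ν x = ∫ w in Wset, Real.exp ⟪δ, s (x, w)⟫ * f (x, w)) →
          (∀ x, νhat x = ∫ w in Wset, Real.exp ⟪δ, s (x, w)⟫ * fhat (x, w)) →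
          (∀ x, νdag x = min (max (νhat x) (Real.exp (-(Δ * Ms)) / 2))
              (2 * Real.exp (Δ * Ms))) →
          (∀ x, η x = ∫ w in Wset, Real.exp ⟪δ, s (x, w)⟫ * μ (x, w) * f (x, w)) →
          (∀ x, ηhat x = ∫ w in Wset,
              Real.exp ⟪δ, s (x, w)⟫ * μhat (x, w) * fhat (x, w)) →
          (∀ x, m x = η x / ν x) →
          (∀ x, mhat x = ηhat x / νdag x) →
          eLpNorm (fun p => mhat p.1 - m p.1) 2 Pm
            ≤ ENNReal.ofReal C₂ *
              (eLpNorm (fun p => μhat p - μ p) 2 Pm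
                + eLpNorm (fun p => fhat p - f p) 2 Pm) := by
  classical
  have hXne : Nonempty X := by
    by_contra h
    have h0 : (Set.univ : Set X) = ∅ := Set.univ_eq_empty_iff.2 (not_nonempty_iff.1 h)
    have h1 : PX Set.univ = 1 := measure_univ
    rw [h0] at h1
    simp at h1
  obtain ⟨x₀⟩ := hXne
  have hΔ0 : 0 ≤ Δ := (norm_nonneg δ).trans hδ
  have hMs0 : 0 ≤ Ms := (norm_nonneg _).trans (hs_bdd (x₀, 0))
  have hM0 : 0 ≤ M := (abs_nonneg _).trans (hμ_bdd (x₀, 0))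
  set τ := Δ * Ms with hτdef
  have hτ0 : 0 ≤ τ := mul_nonneg hΔ0 hMs0
  have hEτpos : 0 < Real.exp τ := Real.exp_pos _
  have heτpos : 0 < Real.exp (-τ) := Real.exp_pos _
  have heτle : Real.exp (-τ) ≤ Real.exp τ := Real.exp_le_exp.2 (by linarith)
  set K := max M |F| with hKdef
  have hK0 : 0 ≤ K := le_trans hM0 (le_max_left _ _)
  set C₁ := 2 * Real.exp τ ^ 2 * K + 2 * Real.exp τ ^ 4 * M with hC₁def
  have hC₁0 : 0 ≤ C₁ := by
    have := sq_nonneg (Real.exp τ)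
    have h4 : (0:ℝ) ≤ Real.exp τ ^ 4 := by positivity
    have h2 : (0:ℝ) ≤ Real.exp τ ^ 2 := by positivity
    nlinarith
  refine ⟨C₁ * Real.sqrt |fmax| * Real.sqrt fmin⁻¹ * (volume Wset).toReal, ?_⟩
  intro μhat fhat hμhat_meas hμhat_bdd hfhat_meas hfhat_bdd Pm hPm
  intro ν νhat νdag η ηhat m mhat hν hνhat hνdag hη hηhat hm hmhat
  set W : Measure (EuclideanSpace ℝ (Fin q)) := volume.restrict Wset with hWdef
  haveI hWfin : IsFiniteMeasure W := ⟨by rw [hWdef, Measure.restrict_apply_univ]; exact hWvol⟩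
  set vW : ℝ≥0∞ := volume Wset with hvWdef
  have hvWne : vW ≠ ⊤ := hWvol.ne
  -- exponential factor
  have hE_meas : Measurable fun p : X × EuclideanSpace ℝ (Fin q) => Real.exp ⟪δ, s p⟫ :=
    Real.measurable_exp.comp
      ((Continuous.measurable (Continuous.inner continuous_const continuous_id)).comp hs_meas)
  have hE_bdd : ∀ p : X × EuclideanSpace ℝ (Fin q),
      Real.exp (-τ) ≤ Real.exp ⟪δ, s p⟫ ∧ Real.exp ⟪δ, s p⟫ ≤ Real.exp τ := by
    intro p
    have h1 : |⟪δ, s p⟫| ≤ τ := by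
      refine (abs_real_inner_le_norm δ (s p)).trans ?_
      exact mul_le_mul hδ (hs_bdd p) (norm_nonneg _) hΔ0
    rw [abs_le] at h1
    exact ⟨Real.exp_le_exp.2 (by linarith [h1.1]), Real.exp_le_exp.2 h1.2⟩
  -- ENNReal-valued difference function
  set D : X × EuclideanSpace ℝ (Fin q) → ℝ≥0∞ :=
    fun p => (‖μhat p - μ p‖₊ : ℝ≥0∞) + (‖fhat p - f p‖₊ : ℝ≥0∞) with hDdef
  have hD_meas : Measurable D :=
    ((hμhat_meas.sub hμ_meas).enorm).add ((hfhat_meas.sub hf_meas).enorm)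
  set G : X → ℝ≥0∞ := fun x => ∫⁻ w, D (x, w) ∂W with hGdef
  have hG_meas : Measurable G := by
    refine Measurable.lintegral_prod_right (f := fun x w => D (x, w)) ?_
    exact hD_meas
  -- integrability helper
  have intOn : ∀ (h : EuclideanSpace ℝ (Fin q) → ℝ), Measurable h →
      ∀ C : ℝ, (∀ w ∈ Wset, |h w| ≤ C) → Integrable h W := by
    intro h hm C hb
    refine (integrable_const C).mono' hm.aestronglyMeasurable ?_
    have := ae_restrict_mem hWmeas (μ := volume)
    rw [← hWdef] at this
    filter_upwards [this] with w hw
    simpa [Real.norm_eq_abs] using hb w hw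
  -- main pointwise (in x) bound
  have hB1 : ∀ᵐ x ∂PX, ((‖mhat x - m x‖₊ : ℝ≥0∞)) ≤ ENNReal.ofReal C₁ * G x := by
    filter_upwards [hf_int] with x hx1
    -- local integrability facts
    have hmw : ∀ g : X × EuclideanSpace ℝ (Fin q) → ℝ, Measurable g →
        Measurable fun w => g (x, w) := fun g hg => hg.comp measurable_prodMk_left
    have hf0 : ∀ w ∈ Wset, 0 ≤ f (x, w) := fun w hw => (hfmin.trans_le (hf_bdd x w hw).1).le
    have hi_f : Integrable (fun w => f (x, w)) W := by
      refine intOn _ (hmw f hf_meas) |fmax| (fun w hw => ?_)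
      rw [abs_of_nonneg (hf0 w hw)]
      exact (hf_bdd x w hw).2.trans (le_abs_self fmax)
    have hi_Ef : Integrable (fun w => Real.exp ⟪δ, s (x, w)⟫ * f (x, w)) W := by
      refine intOn _ ((hmw _ hE_meas).mul (hmw f hf_meas)) (Real.exp τ * |fmax|)
        (fun w hw => ?_)
      rw [abs_mul, abs_of_pos (Real.exp_pos _)]
      refine mul_le_mul (hE_bdd _).2 ?_ (abs_nonneg _) hEτpos.le
      rw [abs_of_nonneg (hf0 w hw)]
      exact (hf_bdd x w hw).2.trans (le_abs_self fmax)
    have hi_Efhat : Integrable (fun w => Real.exp ⟪δ, s (x, w)⟫ * fhat (x, w)) W := by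
      refine intOn _ ((hmw _ hE_meas).mul (hmw fhat hfhat_meas)) (Real.exp τ * |F|)
        (fun w hw => ?_)
      rw [abs_mul, abs_of_pos (Real.exp_pos _)]
      refine mul_le_mul (hE_bdd _).2 ?_ (abs_nonneg _) hEτpos.le
      rw [abs_of_nonneg (hfhat_bdd _).1]
      exact (hfhat_bdd _).2.trans (le_abs_self F)
    have hi_Eμf : Integrable
        (fun w => Real.exp ⟪δ, s (x, w)⟫ * μ (x, w) * f (x, w)) W := by
      refine intOn _ (((hmw _ hE_meas).mul (hmw μ hμ_meas)).mul (hmw f hf_meas))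
        (Real.exp τ * M * |fmax|) (fun w hw => ?_)
      rw [abs_mul, abs_mul, abs_of_pos (Real.exp_pos _)]
      refine mul_le_mul (mul_le_mul (hE_bdd _).2 (hμ_bdd _) (abs_nonneg _) hEτpos.le)
        ?_ (abs_nonneg _) (by positivity)
      rw [abs_of_nonneg (hf0 w hw)]
      exact (hf_bdd x w hw).2.trans (le_abs_self fmax)
    have hi_Eμhfh : Integrable
        (fun w => Real.exp ⟪δ, s (x, w)⟫ * μhat (x, w) * fhat (x, w)) W := by
      refine intOn _ (((hmw _ hE_meas).mul (hmw μhat hμhat_meas)).mul (hmw fhat hfhat_meas))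
        (Real.exp τ * M * |F|) (fun w hw => ?_)
      rw [abs_mul, abs_mul, abs_of_pos (Real.exp_pos _)]
      refine mul_le_mul (mul_le_mul (hE_bdd _).2 (hμhat_bdd _) (abs_nonneg _) hEτpos.le)
        ?_ (abs_nonneg _) (by positivity)
      rw [abs_of_nonneg (hfhat_bdd _).1]
      exact (hfhat_bdd _).2.trans (le_abs_self F)
    have hi_absμd : Integrable (fun w => |μhat (x, w) - μ (x, w)|) W := by
      refine intOn _ (hmw _ (hμhat_meas.sub hμ_meas)).abs (2 * M) (fun w hw => ?_)
      rw [abs_abs]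
      calc |μhat (x, w) - μ (x, w)| ≤ |μhat (x, w)| + |μ (x, w)| := abs_sub _ _
        _ ≤ 2 * M := by linarith [hμhat_bdd (x, w), hμ_bdd (x, w)]
    have hi_absfd : Integrable (fun w => |fhat (x, w) - f (x, w)|) W := by
      refine intOn _ (hmw _ (hfhat_meas.sub hf_meas)).abs (|F| + |fmax|) (fun w hw => ?_)
      rw [abs_abs]
      calc |fhat (x, w) - f (x, w)| ≤ |fhat (x, w)| + |f (x, w)| := abs_sub _ _
        _ ≤ |F| + |fmax| := by
            refine add_le_add ?_ ?_
            · rw [abs_of_nonneg (hfhat_bdd _).1]; exact (hfhat_bdd _).2.trans (le_abs_self F)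
            · rw [abs_of_nonneg (hf0 w hw)]; exact (hf_bdd x w hw).2.trans (le_abs_self fmax)
    have hi_g : Integrable (fun w => |μhat (x, w) - μ (x, w)| + |fhat (x, w) - f (x, w)|) W :=
      hi_absμd.add hi_absfd
    set I : ℝ := ∫ w in Wset, (|μhat (x, w) - μ (x, w)| + |fhat (x, w) - f (x, w)|) with hIdef
    have hI0 : 0 ≤ I := integral_nonneg (fun w => by positivity)
    -- ν bounds
    have hx_nu_lb : Real.exp (-τ) ≤ ν x := by
      rw [hν]
      have h1 : ∫ w in Wset, Real.exp (-τ) * f (x, w) = Real.exp (-τ) := by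
        rw [integral_const_mul, hx1, mul_one]
      rw [← h1]
      exact setIntegral_mono_on (hi_f.const_mul _) hi_Ef hWmeas
        (fun w hw => mul_le_mul_of_nonneg_right (hE_bdd _).1 (hf0 w hw))
    have hx_nu_ub : ν x ≤ Real.exp τ := by
      rw [hν]
      have h1 : ∫ w in Wset, Real.exp τ * f (x, w) = Real.exp τ := by
        rw [integral_const_mul, hx1, mul_one]
      rw [← h1]
      exact setIntegral_mono_on hi_Ef (hi_f.const_mul _) hWmeas
        (fun w hw => mul_le_mul_of_nonneg_right (hE_bdd _).2 (hf0 w hw))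
    -- η bound
    have hx_eta : |η x| ≤ Real.exp τ * M := by
      rw [hη]
      have h2 := norm_integral_le_integral_norm (μ := W)
        (fun w => Real.exp ⟪δ, s (x, w)⟫ * μ (x, w) * f (x, w))
      simp only [Real.norm_eq_abs] at h2
      refine h2.trans ?_
      have h3 : ∫ w in Wset, Real.exp τ * M * f (x, w) = Real.exp τ * M := by
        rw [integral_const_mul, hx1, mul_one]
      rw [← h3]
      refine setIntegral_mono_on hi_Eμf.abs (hi_f.const_mul _) hWmeas (fun w hw => ?_)
      rw [abs_mul, abs_mul, abs_of_pos (Real.exp_pos _), abs_of_nonneg (hf0 w hw)]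
      refine mul_le_mul ?_ le_rfl (hf0 w hw) (by positivity)
      exact mul_le_mul (hE_bdd _).2 (hμ_bdd _) (abs_nonneg _) hEτpos.le
    -- νhat gap
    have hx_gapν : |νhat x - ν x| ≤ Real.exp τ * ∫ w in Wset, |fhat (x, w) - f (x, w)| := by
      have hsub : νhat x - ν x = ∫ w in Wset,
          (Real.exp ⟪δ, s (x, w)⟫ * fhat (x, w) - Real.exp ⟪δ, s (x, w)⟫ * f (x, w)) := by
        rw [hνhat, hν, integral_sub hi_Efhat hi_Ef]
      rw [hsub]
      have h2 := norm_integral_le_integral_norm (μ := W)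
        (fun w => Real.exp ⟪δ, s (x, w)⟫ * fhat (x, w) - Real.exp ⟪δ, s (x, w)⟫ * f (x, w))
      simp only [Real.norm_eq_abs] at h2
      refine h2.trans ?_
      rw [← integral_const_mul]
      refine setIntegral_mono_on (hi_Efhat.sub hi_Ef).abs (hi_absfd.const_mul _) hWmeas
        (fun w hw => ?_)
      rw [← mul_sub, abs_mul, abs_of_pos (Real.exp_pos _)]
      exact mul_le_mul_of_nonneg_right (hE_bdd _).2 (abs_nonneg _)
    -- ηhat gap
    have hx_gapη : |ηhat x - η x| ≤ Real.exp τ * (K * I) := by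
      have hsub : ηhat x - η x = ∫ w in Wset,
          (Real.exp ⟪δ, s (x, w)⟫ * μhat (x, w) * fhat (x, w)
            - Real.exp ⟪δ, s (x, w)⟫ * μ (x, w) * f (x, w)) := by
        rw [hηhat, hη, integral_sub hi_Eμhfh hi_Eμf]
      rw [hsub]
      have h2 := norm_integral_le_integral_norm (μ := W)
        (fun w => Real.exp ⟪δ, s (x, w)⟫ * μhat (x, w) * fhat (x, w)
          - Real.exp ⟪δ, s (x, w)⟫ * μ (x, w) * f (x, w))
      simp only [Real.norm_eq_abs] at h2
      refine h2.trans ?_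
      have h3 : Real.exp τ * (K * I) = ∫ w in Wset,
          Real.exp τ * (K * (|μhat (x, w) - μ (x, w)| + |fhat (x, w) - f (x, w)|)) := by
        rw [hIdef, integral_const_mul, integral_const_mul]
      rw [h3]
      refine setIntegral_mono_on (hi_Eμhfh.sub hi_Eμf).abs ((hi_g.const_mul K).const_mul _)
        hWmeas (fun w hw => ?_)
      have h1 : Real.exp ⟪δ, s (x, w)⟫ * μhat (x, w) * fhat (x, w)
          - Real.exp ⟪δ, s (x, w)⟫ * μ (x, w) * f (x, w)
          = Real.exp ⟪δ, s (x, w)⟫ *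
            ((μhat (x, w) - μ (x, w)) * fhat (x, w) + μ (x, w) * (fhat (x, w) - f (x, w))) := by
        ring
      rw [h1, abs_mul, abs_of_pos (Real.exp_pos _)]
      refine mul_le_mul (hE_bdd _).2 ?_ (abs_nonneg _) hEτpos.le
      refine (abs_add_le _ _).trans ?_
      rw [abs_mul, abs_mul]
      have hfK : |fhat (x, w)| ≤ K := by
        rw [abs_of_nonneg (hfhat_bdd _).1]
        exact (hfhat_bdd _).2.trans ((le_abs_self F).trans (le_max_right _ _))
      have hμK : |μ (x, w)| ≤ K := (hμ_bdd _).trans (le_max_left _ _)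
      have t1 : |μhat (x, w) - μ (x, w)| * |fhat (x, w)| ≤ |μhat (x, w) - μ (x, w)| * K :=
        mul_le_mul_of_nonneg_left hfK (abs_nonneg _)
      have t2 : |μ (x, w)| * |fhat (x, w) - f (x, w)| ≤ K * |fhat (x, w) - f (x, w)| :=
        mul_le_mul_of_nonneg_right hμK (abs_nonneg _)
      nlinarith [abs_nonneg (μhat (x, w) - μ (x, w)), abs_nonneg (fhat (x, w) - f (x, w))]
    -- νdag facts
    have hνdlb : Real.exp (-τ) / 2 ≤ νdag x := by
      rw [hνdag]
      exact le_min (le_max_right _ _) (by linarith)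
    have hνpos : 0 < ν x := heτpos.trans_le hx_nu_lb
    have hνdpos : 0 < νdag x := by linarith
    have hclamp : |νdag x - ν x| ≤ |νhat x - ν x| := by
      rw [hνdag]
      exact clamp_abs_sub_le (by linarith) (by linarith)
    -- decomposition
    have hdecomp : mhat x - m x
        = (ηhat x - η x) / νdag x + η x * (ν x - νdag x) / (νdag x * ν x) := by
      rw [hmhat, hm]
      field_simp
      ring
    have habs : |mhat x - m x| ≤ |ηhat x - η x| / νdag x
        + (Real.exp τ * M) * |νhat x - ν x| / (νdag x * ν x) := by
      rw [hdecomp]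
      refine (abs_add_le _ _).trans (add_le_add ?_ ?_)
      · rw [abs_div, abs_of_pos hνdpos]
      · rw [abs_div, abs_mul, abs_of_pos (mul_pos hνdpos hνpos)]
        refine div_le_div₀ (by positivity) ?_ (mul_pos hνdpos hνpos) le_rfl
        refine mul_le_mul hx_eta ?_ (abs_nonneg _) (by positivity)
        rw [abs_sub_comm]
        exact hclamp
    have hbound1 : |ηhat x - η x| / νdag x ≤ 2 * Real.exp τ ^ 2 * K * I := by
      have h1 : |ηhat x - η x| / νdag x ≤ (Real.exp τ * (K * I)) / (Real.exp (-τ) / 2) :=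
        div_le_div₀ (by positivity) hx_gapη (by positivity) hνdlb
      refine h1.trans (le_of_eq ?_)
      rw [Real.exp_neg]
      field_simp
    have hbound2 : (Real.exp τ * M) * |νhat x - ν x| / (νdag x * ν x)
        ≤ 2 * Real.exp τ ^ 4 * M * I := by
      have h1 : (Real.exp τ * M) * |νhat x - ν x| / (νdag x * ν x)
          ≤ ((Real.exp τ * M) * (Real.exp τ * I)) / ((Real.exp (-τ) / 2) * Real.exp (-τ)) := by
        refine div_le_div₀ (by positivity) ?_ (by positivity) ?_
        · refine mul_le_mul_of_nonneg_left ?_ (by positivity)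
          refine hx_gapν.trans (mul_le_mul_of_nonneg_left ?_ hEτpos.le)
          refine setIntegral_mono_on hi_absfd hi_g hWmeas (fun w hw => ?_)
          have := abs_nonneg (μhat (x, w) - μ (x, w))
          linarith
        · exact mul_le_mul hνdlb hx_nu_lb heτpos.le hνdpos.le
      refine h1.trans (le_of_eq ?_)
      rw [Real.exp_neg]
      field_simp
    have hfinal : |mhat x - m x| ≤ C₁ * I := by
      have := habs.trans (add_le_add hbound1 hbound2)
      rw [hC₁def]
      nlinarith
    -- to ENNReal
    have hofReal : ENNReal.ofReal I = G x := by
      rw [hIdef, ofReal_integral_eq_lintegral_ofReal hi_g (ae_of_all _ fun w => by positivity)]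
      refine lintegral_congr fun w => ?_
      rw [ENNReal.ofReal_add (abs_nonneg _) (abs_nonneg _), ← Real.enorm_eq_ofReal_abs,
        ← Real.enorm_eq_ofReal_abs]
      rfl
    calc (‖mhat x - m x‖₊ : ℝ≥0∞) = ENNReal.ofReal |mhat x - m x| :=
          Real.enorm_eq_ofReal_abs _
      _ ≤ ENNReal.ofReal (C₁ * I) := ENNReal.ofReal_le_ofReal hfinal
      _ = ENNReal.ofReal C₁ * ENNReal.ofReal I := ENNReal.ofReal_mul hC₁0
      _ = ENNReal.ofReal C₁ * G x := by rw [hofReal]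
  -- lift the pointwise bound to `Pm`
  have hPrae : ∀ᵐ p ∂(PX.prod W), ((‖mhat p.1 - m p.1‖₊ : ℝ≥0∞)) ≤ ENNReal.ofReal C₁ * G p.1 :=
    Measure.quasiMeasurePreserving_fst.ae hB1
  have hPmae : ∀ᵐ p ∂Pm, ((‖mhat p.1 - m p.1‖₊ : ℝ≥0∞)) ≤ ENNReal.ofReal C₁ * G p.1 := by
    rw [hPm]
    exact Filter.Eventually.filter_mono
      (Measure.AbsolutelyContinuous.ae_le (withDensity_absolutelyContinuous _ _)) hPrae
  have hpow2 : ∀ y : ℝ≥0∞, y ^ (2:ℝ) = y ^ 2 := fun y => by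
    rw [← ENNReal.rpow_natCast y 2]; norm_num
  have hhalf : ∀ A : ℝ≥0∞, (A ^ (1/2:ℝ)) ^ 2 = A := fun A => by
    rw [← hpow2, ← ENNReal.rpow_mul]; norm_num
  have hmemW : ∀ᵐ p ∂(PX.prod W), p.2 ∈ Wset := by
    rw [ae_iff]
    have hset : {p : X × EuclideanSpace ℝ (Fin q) | ¬ p.2 ∈ Wset}
        = (Set.univ : Set X) ×ˢ Wsetᶜ := by
      ext p; simp [Set.mem_prod]
    rw [hset, Measure.prod_prod, hWdef, Measure.restrict_apply hWmeas.compl]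
    simp [Set.compl_inter_self]
  have hwd : ∀ (h : X × EuclideanSpace ℝ (Fin q) → ℝ≥0∞), Measurable h →
      ∫⁻ p, h p ∂Pm = ∫⁻ p, ENNReal.ofReal (f p) * h p ∂(PX.prod W) := by
    intro h hh
    rw [hPm, lintegral_withDensity_eq_lintegral_mul _ hf_meas.ennreal_ofReal hh]
    rfl
  set Sμ := eLpNorm (fun p => μhat p - μ p) 2 Pm with hSμdef
  set Sf := eLpNorm (fun p => fhat p - f p) 2 Pm with hSfdef
  set T := eLpNorm
    (fun p : X × EuclideanSpace ℝ (Fin q) => |μhat p - μ p| + |fhat p - f p|) 2 Pm with hTdef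
  have hTS : T ≤ Sμ + Sf := by
    rw [hTdef, hSμdef, hSfdef]
    have h1 : (fun p : X × EuclideanSpace ℝ (Fin q) => |μhat p - μ p| + |fhat p - f p|)
        = (fun p => |μhat p - μ p|) + (fun p => |fhat p - f p|) := rfl
    rw [h1]
    refine (eLpNorm_add_le ((hμhat_meas.sub hμ_meas).abs.aestronglyMeasurable)
      ((hfhat_meas.sub hf_meas).abs.aestronglyMeasurable) one_le_two).trans ?_
    simp only [← Real.norm_eq_abs, eLpNorm_norm]
    exact le_refl _
  have hTsq : ∫⁻ p, (D p) ^ 2 ∂Pm = T ^ 2 := by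
    rw [hTdef, eLpNorm_eq_lintegral_rpow_enorm_toReal two_ne_zero ENNReal.ofNat_ne_top]
    simp only [ENNReal.toReal_ofNat]
    rw [hhalf]
    refine lintegral_congr fun p => ?_
    rw [hpow2]
    congr 1
    rw [Real.enorm_eq_ofReal_abs, abs_of_nonneg (by positivity),
      ENNReal.ofReal_add (abs_nonneg _) (abs_nonneg _), ← Real.enorm_eq_ofReal_abs,
      ← Real.enorm_eq_ofReal_abs]
    rfl
  -- Cauchy–Schwarz in `w`
  have hCS : ∀ x, G x ^ 2 ≤ vW * ∫⁻ w, D (x, w) ^ 2 ∂W := by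
    intro x
    have hconj : Real.HolderConjugate 2 2 := Real.HolderConjugate.two_two
    have h1 := ENNReal.lintegral_mul_le_Lp_mul_Lq W hconj
      (f := fun w => D (x, w)) (g := fun _ => 1)
      ((hD_meas.comp measurable_prodMk_left).aemeasurable) aemeasurable_const
    simp only [Pi.mul_apply, mul_one, ENNReal.one_rpow, lintegral_one] at h1
    simp_rw [hpow2] at h1
    have hWuniv : W Set.univ = vW := by
      rw [hWdef, Measure.restrict_apply_univ, ← hvWdef]
    rw [hWuniv] at h1
    have hG1 : G x ≤ (∫⁻ w, D (x, w) ^ 2 ∂W) ^ (1/2:ℝ) * vW ^ (1/2:ℝ) := h1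
    calc G x ^ 2 ≤ ((∫⁻ w, D (x, w) ^ 2 ∂W) ^ (1/2:ℝ) * vW ^ (1/2:ℝ)) ^ 2 :=
          pow_le_pow_left' hG1 2
      _ = vW * ∫⁻ w, D (x, w) ^ 2 ∂W := by
          rw [mul_pow, hhalf, hhalf, mul_comm]
  have hGsq_meas : Measurable fun p : X × EuclideanSpace ℝ (Fin q) => G p.1 ^ 2 :=
    (hG_meas.comp measurable_fst).pow_const 2
  -- the chain of lintegral estimates
  have e1 : ∫⁻ p, G p.1 ^ 2 ∂Pm = ∫⁻ p, ENNReal.ofReal (f p) * G p.1 ^ 2 ∂(PX.prod W) :=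
    hwd _ hGsq_meas
  have e2 : ∫⁻ p, ENNReal.ofReal (f p) * G p.1 ^ 2 ∂(PX.prod W)
      ≤ ENNReal.ofReal |fmax| * ∫⁻ p, G p.1 ^ 2 ∂(PX.prod W) := by
    rw [← lintegral_const_mul' _ _ ENNReal.ofReal_ne_top]
    refine lintegral_mono_ae (hmemW.mono fun p hp => ?_)
    refine mul_le_mul_left (ENNReal.ofReal_le_ofReal ?_) _
    exact ((hf_bdd p.1 p.2 hp).2).trans (le_abs_self fmax)
  have e3 : ∫⁻ p, G p.1 ^ 2 ∂(PX.prod W) = ∫⁻ x, G x ^ 2 * vW ∂PX := by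
    rw [lintegral_prod _ hGsq_meas.aemeasurable]
    refine lintegral_congr fun x => ?_
    have h0 : ∫⁻ (_ : EuclideanSpace ℝ (Fin q)), G x ^ 2 ∂W = G x ^ 2 * vW := by
      rw [lintegral_const, hWdef, Measure.restrict_apply_univ, ← hvWdef]
    exact h0
  have e4 : ∫⁻ x, G x ^ 2 * vW ∂PX ≤ vW * vW * ∫⁻ p, D p ^ 2 ∂(PX.prod W) := by
    rw [lintegral_prod _ (hD_meas.pow_const 2).aemeasurable]
    calc ∫⁻ x, G x ^ 2 * vW ∂PX
        ≤ ∫⁻ x, (vW * ∫⁻ w, D (x, w) ^ 2 ∂W) * vW ∂PX :=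
          lintegral_mono fun x => mul_le_mul_left (hCS x) _
      _ = vW * vW * ∫⁻ x, ∫⁻ w, D (x, w) ^ 2 ∂W ∂PX := by
          rw [← lintegral_const_mul' (vW * vW) _ (ENNReal.mul_ne_top hvWne hvWne)]
          exact lintegral_congr fun x => by ring
  have e5 : ∫⁻ p, D p ^ 2 ∂(PX.prod W)
      ≤ (ENNReal.ofReal fmin)⁻¹ * ∫⁻ p, ENNReal.ofReal (f p) * D p ^ 2 ∂(PX.prod W) := by
    rw [← lintegral_const_mul' _ _ (ENNReal.inv_ne_top.2 (ENNReal.ofReal_pos.2 hfmin).ne')]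
    refine lintegral_mono_ae (hmemW.mono fun p hp => ?_)
    calc D p ^ 2 = (ENNReal.ofReal fmin)⁻¹ * (ENNReal.ofReal fmin * D p ^ 2) := by
          rw [← mul_assoc,
            ENNReal.inv_mul_cancel (ENNReal.ofReal_pos.2 hfmin).ne' ENNReal.ofReal_ne_top,
            one_mul]
      _ ≤ (ENNReal.ofReal fmin)⁻¹ * (ENNReal.ofReal (f p) * D p ^ 2) :=
          mul_le_mul_right
            (mul_le_mul_left (ENNReal.ofReal_le_ofReal (hf_bdd p.1 p.2 hp).1) _) _
  have e6 : ∫⁻ p, ENNReal.ofReal (f p) * D p ^ 2 ∂(PX.prod W) = ∫⁻ p, D p ^ 2 ∂Pm :=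
    (hwd _ (hD_meas.pow_const 2)).symm
  have key1 : ∫⁻ p, ((‖mhat p.1 - m p.1‖₊ : ℝ≥0∞)) ^ 2 ∂Pm
      ≤ ENNReal.ofReal C₁ ^ 2 *
        (ENNReal.ofReal |fmax| * (vW * vW * ((ENNReal.ofReal fmin)⁻¹ * T ^ 2))) := by
    calc ∫⁻ p, ((‖mhat p.1 - m p.1‖₊ : ℝ≥0∞)) ^ 2 ∂Pm
        ≤ ∫⁻ p, (ENNReal.ofReal C₁ * G p.1) ^ 2 ∂Pm :=
          lintegral_mono_ae (hPmae.mono fun p hp => pow_le_pow_left' hp 2)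
      _ = ENNReal.ofReal C₁ ^ 2 * ∫⁻ p, G p.1 ^ 2 ∂Pm := by
          simp_rw [mul_pow]
          exact lintegral_const_mul' _ _ (ENNReal.pow_ne_top ENNReal.ofReal_ne_top)
      _ ≤ ENNReal.ofReal C₁ ^ 2 *
          (ENNReal.ofReal |fmax| * (vW * vW * ((ENNReal.ofReal fmin)⁻¹ * T ^ 2))) := by
          refine mul_le_mul_right ?_ _
          rw [e1]
          refine e2.trans (mul_le_mul_right ?_ _)
          rw [e3]
          refine e4.trans (mul_le_mul_right ?_ _)
          refine e5.trans ?_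
          rw [e6, hTsq]
  -- the squared constant
  have hC₂sq : ENNReal.ofReal (C₁ * Real.sqrt |fmax| * Real.sqrt fmin⁻¹ * vW.toReal) ^ 2
      = ENNReal.ofReal C₁ ^ 2 *
        (ENNReal.ofReal |fmax| * (vW * vW * (ENNReal.ofReal fmin)⁻¹)) := by
    rw [ENNReal.ofReal_mul
        (mul_nonneg (mul_nonneg hC₁0 (Real.sqrt_nonneg _)) (Real.sqrt_nonneg _)),
      ENNReal.ofReal_mul (mul_nonneg hC₁0 (Real.sqrt_nonneg _)),
      ENNReal.ofReal_mul hC₁0, ENNReal.ofReal_toReal hvWne,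
      mul_pow, mul_pow, mul_pow,
      ← ENNReal.ofReal_pow (Real.sqrt_nonneg _), Real.sq_sqrt (abs_nonneg fmax),
      ← ENNReal.ofReal_pow (Real.sqrt_nonneg _), Real.sq_sqrt (inv_nonneg.2 hfmin.le),
      ENNReal.ofReal_inv_of_pos hfmin]
    ring
  -- conclude
  rw [eLpNorm_eq_lintegral_rpow_enorm_toReal two_ne_zero ENNReal.ofNat_ne_top]
  simp only [ENNReal.toReal_ofNat]
  have hle : ∫⁻ p, ((‖mhat p.1 - m p.1‖₊ : ℝ≥0∞)) ^ (2:ℝ) ∂Pm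
      ≤ (ENNReal.ofReal (C₁ * Real.sqrt |fmax| * Real.sqrt fmin⁻¹ * vW.toReal)
          * (Sμ + Sf)) ^ 2 := by
    simp_rw [hpow2]
    refine key1.trans ?_
    rw [mul_pow, hC₂sq]
    calc ENNReal.ofReal C₁ ^ 2 *
          (ENNReal.ofReal |fmax| * (vW * vW * ((ENNReal.ofReal fmin)⁻¹ * T ^ 2)))
        = ENNReal.ofReal C₁ ^ 2 *
          (ENNReal.ofReal |fmax| * (vW * vW * (ENNReal.ofReal fmin)⁻¹)) * T ^ 2 := by
          ring
      _ ≤ ENNReal.ofReal C₁ ^ 2 *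
          (ENNReal.ofReal |fmax| * (vW * vW * (ENNReal.ofReal fmin)⁻¹)) * (Sμ + Sf) ^ 2 :=
          mul_le_mul_right (pow_le_pow_left' hTS 2) _
  calc (∫⁻ p, ((‖mhat p.1 - m p.1‖₊ : ℝ≥0∞)) ^ (2:ℝ) ∂Pm) ^ (1/2:ℝ)
      ≤ ((ENNReal.ofReal (C₁ * Real.sqrt |fmax| * Real.sqrt fmin⁻¹ * vW.toReal)
          * (Sμ + Sf)) ^ 2) ^ (1/2:ℝ) := ENNReal.rpow_le_rpow hle (by norm_num)
    _ = ENNReal.ofReal (C₁ * Real.sqrt |fmax| * Real.sqrt fmin⁻¹ * vW.toReal)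
          * (Sμ + Sf) := by
        rw [← hpow2, ← ENNReal.rpow_mul]
        norm_num
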